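/- For real numbers A, B, C, D with A² + B² ≠ 0 and complex numbers a = (A − iB)/2, b = (C − iD)/2, the real double 2-form P = W − αG − βη, with α = −(AC+BD)/(A²+B²) and β = (AD−BC)/(A²+B²), satisfies: P is twice the real part of the self-dual tensor 𝒫 = 𝒲 + (b/a)𝒢, where 𝒲 = (1/2)(W − i∗W) and 𝒢 = (1/2)(G − iη). Consequently, for a real symmetric tensor R, the real alignment condition R^μ_{(α}P_{β)μγδ} = 0 is equivalent to the complex condition R^μ_{(α}𝒫_{β)μγδ} = 0. -/

import Mathlib

/-- With `2a = A - iB`, `2b = C - iD`, `A² + B² ≠ 0`,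
`α = -(AC+BD)/(A²+B²)`, `β = (AD-BC)/(A²+B²)`, the real double 2-form
`P = W - αG - βη` is twice the real part of the self-dual tensor `𝒫 = 𝒲 + (b/a)𝒢`,
where `𝒲 = (1/2)(W - i∗W)` and `𝒢 = (1/2)(G - iη)`; consequently, for a real symmetric
tensor `R`, the real alignment condition `R^μ_{(α}P_{β)μγδ} = 0` is equivalent to the
complex one `R^μ_{(α}𝒫_{β)μγδ} = 0`. -/
theorem real_vs_complex_alignment
    -- Dm: complexified double 2-forms; Em: complexified target of the contraction with R
    (Dm Em : Type*) [AddCommGroup Dm] [Module ℂ Dm] [AddCommGroup Em] [Module ℂ Em]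
    -- conjugations (real structures)
    (conjD : Dm → Dm)
    (hDadd : ∀ x y, conjD (x + y) = conjD x + conjD y)
    (hDsmul : ∀ (c : ℂ) (x : Dm), conjD (c • x) = (starRingEnd ℂ c) • conjD x)
    (hDinv : ∀ x, conjD (conjD x) = x)
    (conjE : Em → Em)
    (hEadd : ∀ x y, conjE (x + y) = conjE x + conjE y)
    (hEsmul : ∀ (c : ℂ) (x : Em), conjE (c • x) = (starRingEnd ℂ c) • conjE x)
    (hEinv : ∀ x, conjE (conjE x) = x)
    -- the Hodge dual acting on the last index pair of double 2-forms, and on the target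
    (s : Module.End ℂ Dm) (hs2 : s * s = -1)
    (hsconj : ∀ x, conjD (s x) = s (conjD x))
    (sE : Module.End ℂ Em) (hsE2 : sE * sE = -1)
    (hsEconj : ∀ x, conjE (sE x) = sE (conjE x))
    -- the real tensors W (Weyl), G = (1/2)g∧g and η (volume element); ∗G = η, ∗η = -G
    (Wd Gd ηd : Dm)
    (hWreal : conjD Wd = Wd) (hGreal : conjD Gd = Gd) (hηreal : conjD ηd = ηd)
    (hsG : s Gd = ηd) (hsη : s ηd = -Gd)
    -- the invariants
    (A B C D : ℝ) (hABne : A ^ 2 + B ^ 2 ≠ 0)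
    (a b : ℂ)
    (ha : a = ((A : ℂ) - (B : ℂ) * Complex.I) / 2)
    (hb : b = ((C : ℂ) - (D : ℂ) * Complex.I) / 2)
    (α β : ℝ)
    (hα : α = -(A * C + B * D) / (A ^ 2 + B ^ 2))
    (hβ : β = (A * D - B * C) / (A ^ 2 + B ^ 2))
    -- the contraction with the real symmetric tensor R followed by symmetrization,
    -- x ↦ R^μ_{(α} x_{β)μγδ}; it is ℂ-linear, real, and commutes with the Hodge dual
    (CR : Dm →ₗ[ℂ] Em)
    (hCRconj : ∀ x, CR (conjD x) = conjE (CR x))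
    (hCRs : ∀ x, CR (s x) = sE (CR x)) :
    -- P = W - αG - βη is twice the real part of 𝒫 = 𝒲 + (b/a)𝒢
    (Wd - (α : ℂ) • Gd - (β : ℂ) • ηd =
        (((1 : ℂ) / 2) • (Wd - Complex.I • s Wd) +
          (b / a) • (((1 : ℂ) / 2) • (Gd - Complex.I • ηd))) +
        conjD (((1 : ℂ) / 2) • (Wd - Complex.I • s Wd) +
          (b / a) • (((1 : ℂ) / 2) • (Gd - Complex.I • ηd)))) ∧
    -- the real alignment condition is equivalent to the complex one
    (CR (Wd - (α : ℂ) • Gd - (β : ℂ) • ηd) = 0 ↔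
      CR (((1 : ℂ) / 2) • (Wd - Complex.I • s Wd) +
        (b / a) • (((1 : ℂ) / 2) • (Gd - Complex.I • ηd))) = 0) := by
  -- the key scalar identity b/a = -α - βI
  have hden : (A:ℂ) - B * Complex.I ≠ 0 := by
    intro h
    apply hABne
    have hA : A = 0 := by have := congrArg Complex.re h; simpa using this
    have hB : B = 0 := by have := congrArg Complex.im h; simpa using this
    rw [hA, hB]; ring
  have hAB : ((A:ℂ)^2 + (B:ℂ)^2) ≠ 0 := by exact_mod_cast hABne
  have hz : b / a = -(α:ℂ) - (β:ℂ) * Complex.I := by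
    rw [ha, hb, hα, hβ]
    push_cast
    rw [div_div_div_cancel_right₀ (two_ne_zero), div_eq_iff hden]
    field_simp
    ring_nf
    linear_combination ((C:ℂ)*B^2 - A*B*D) * Complex.I_sq
  -- conjugation basics
  have hDneg : ∀ x, conjD (-x) = -conjD x := by
    intro x; have h := hDsmul (-1) x; simpa using h
  have hDsub : ∀ x y, conjD (x - y) = conjD x - conjD y := by
    intro x y; rw [sub_eq_add_neg, hDadd, hDneg, sub_eq_add_neg]
  set Pc : Dm := ((1 : ℂ) / 2) • (Wd - Complex.I • s Wd) +
      (b / a) • (((1 : ℂ) / 2) • (Gd - Complex.I • ηd)) with hPc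
  have hconjPc : conjD Pc =
      ((1:ℂ)/2) • (Wd + Complex.I • s Wd) +
      (-(α:ℂ) + (β:ℂ) * Complex.I) • (((1:ℂ)/2) • (Gd + Complex.I • ηd)) := by
    rw [hPc, hDadd, hDsmul, hDsub, hDsmul, hsconj, hWreal,
      hDsmul, hDsmul, hDsub, hDsmul, hGreal, hηreal, hz]
    simp only [map_div₀, map_one, map_ofNat, Complex.conj_I, map_sub, map_add, map_neg,
      Complex.conj_ofReal, map_mul]
    module
  -- part 1
  have hpart1 : Wd - (α : ℂ) • Gd - (β : ℂ) • ηd = Pc + conjD Pc := by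
    rw [hconjPc, hPc, hz]
    match_scalars <;> (ring_nf; try simp only [Complex.I_sq]; try ring_nf; try ring)
  refine ⟨hpart1, ?_⟩
  -- part 2
  have hss : ∀ x : Dm, s (s x) = -x := by
    intro x; have := LinearMap.congr_fun hs2 x; simpa using this
  have hsP : s Pc = Complex.I • Pc := by
    rw [hPc]
    rw [map_add, map_smul, map_smul, map_sub, map_smul, map_smul, map_sub, map_smul,
      hsG, hsη, hss]
    match_scalars <;> (ring_nf; try simp only [Complex.I_sq]; try ring_nf; try ring)
  have hE0 : conjE 0 = 0 := by
    have h := hEsmul 0 0; simpa using h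
  have hCRP : CR (Wd - (α : ℂ) • Gd - (β : ℂ) • ηd) = CR Pc + conjE (CR Pc) := by
    rw [hpart1, map_add, hCRconj]
  constructor
  · intro h
    set z := CR Pc with hzdef
    have h1 : z + conjE z = 0 := by rw [← hCRP]; exact h
    have hcz : conjE z = -z := eq_neg_of_add_eq_zero_right h1
    have hsz : sE z = Complex.I • z := by
      rw [hzdef, ← hCRs, hsP, map_smul]
    have e1 : Complex.I • z = -(Complex.I • z) := by
      have h2 := hsEconj z
      rw [hsz, hcz, map_neg, hsz, hEsmul, Complex.conj_I, hcz,
        neg_smul, smul_neg, neg_neg] at h2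
      exact h2
    have h3 : ((2 : ℂ) * Complex.I) • z = 0 := by
      rw [eq_neg_iff_add_eq_zero] at e1
      calc ((2 : ℂ) * Complex.I) • z = Complex.I • z + Complex.I • z := by module
        _ = 0 := e1
    have h2I : (2 : ℂ) * Complex.I ≠ 0 := by
      simp [Complex.I_ne_zero]
    have h4 := congrArg (fun w => ((2 : ℂ) * Complex.I)⁻¹ • w) h3
    simpa [smul_smul, inv_mul_cancel₀ h2I] using h4
  · intro h
    rw [hCRP, h, hE0, add_zero]
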